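/- arXiv:1602.02070 — 3 statements merged into one kernel-verified Lean document; each statement's English description precedes it below -/
import Mathlib

section
/- Suppose M_r ∈ ℝ^{ρ_r×p} and M_c ∈ ℝ^{n×ρ_c} satisfy the RIP with constant δ ∈ (0,1): (1−δ)‖Y‖_F² ≤ (np/(ρ_r ρ_c)) ‖M_r Y M_c‖_F² ≤ (1+δ)‖Y‖_F² for all Y ∈ LR(P_{k_r}, Q_{k_c}). Let X̄ ∈ LR(P_{k_r}, Q_{k_c}), Ẽ ∈ ℝ^{ρ_r×ρ_c}, and X̃ = M_r X̄ M_c + Ẽ. If X* is any minimizer of ‖M_r X M_c − X̃‖_F² over all X ∈ ℝ^{p×n} whose columns lie in span(P_{k_r}) and whose rows lie in span(Q_{k_c}), then ‖X* − X̄‖_F ≤ 2 √(np/(ρ_c ρ_r (1−δ))) ‖Ẽ‖_F. -/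
open Matrix

/-- Frobenius norm of a real matrix. -/
noncomputable def frobNorm {m n : Type*} [Fintype m] [Fintype n] (A : Matrix m n ℝ) : ℝ :=
  Real.sqrt (∑ i, ∑ j, (A i j) ^ 2)

/-- Euclidean norm of a real vector. -/
noncomputable def vecNorm {n : Type*} [Fintype n] (x : n → ℝ) : ℝ :=
  Real.sqrt (∑ i, (x i) ^ 2)

/-- A row-selection matrix: its rows are distinct standard basis vectors of `ℝ^p`. -/
def IsRowSelection {ρ p : ℕ} (M : Matrix (Fin ρ) (Fin p) ℝ) : Prop :=
  ∃ f : Fin ρ → Fin p, Function.Injective f ∧ ∀ i j, M i j = if j = f i then 1 else 0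

/-- A column-selection matrix: its columns are distinct standard basis vectors of `ℝ^n`. -/
def IsColSelection {n ρ : ℕ} (M : Matrix (Fin n) (Fin ρ) ℝ) : Prop :=
  ∃ f : Fin ρ → Fin n, Function.Injective f ∧ ∀ i j, M i j = if i = f j then 1 else 0

/-- `y` lies in the span of the columns of `P`. -/
def inColSpan {p k : ℕ} (P : Matrix (Fin p) (Fin k) ℝ) (y : Fin p → ℝ) : Prop :=
  ∃ c : Fin k → ℝ, y = P.mulVec c

/-- `Y ∈ LR(P, Q)`: every column of `Y` lies in the column span of `P` and every row of `Y`
lies in the column span of `Q`. -/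
def memLR {p n kr kc : ℕ} (P : Matrix (Fin p) (Fin kr) ℝ) (Q : Matrix (Fin n) (Fin kc) ℝ)
    (Y : Matrix (Fin p) (Fin n) ℝ) : Prop :=
  (∀ j, inColSpan P (fun i => Y i j)) ∧ (∀ i, inColSpan Q (fun j => Y i j))

/-- Graph cumulative coherence `ν = max_i √n ‖Q^⊤ e_i‖₂`. -/
noncomputable def coherence {n k : ℕ} (Q : Matrix (Fin n) (Fin k) ℝ) : ℝ :=
  ⨆ i : Fin n, Real.sqrt n * vecNorm (fun j => Q i j)


section Helpers

variable {m n : Type*} [Fintype m] [Fintype n]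

private lemma frobNorm_eq_norm (A : Matrix m n ℝ) :
    frobNorm A = ‖(WithLp.equiv 2 ((m × n) → ℝ)).symm (fun ij => A ij.1 ij.2)‖ := by
  rw [frobNorm, ← Finset.sum_product', EuclideanSpace.norm_eq]
  simp [sq_abs]

private lemma frobNorm_nonneg (A : Matrix m n ℝ) : 0 ≤ frobNorm A :=
  Real.sqrt_nonneg _

private lemma frobNorm_neg (A : Matrix m n ℝ) : frobNorm (-A) = frobNorm A := by
  unfold frobNorm
  congr 1
  apply Finset.sum_congr rfl; intro i _
  apply Finset.sum_congr rfl; intro j _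
  simp [neg_pow]

private lemma frobNorm_add_le (A B : Matrix m n ℝ) :
    frobNorm (A + B) ≤ frobNorm A + frobNorm B := by
  rw [frobNorm_eq_norm, frobNorm_eq_norm, frobNorm_eq_norm]
  have h : (WithLp.equiv 2 ((m × n) → ℝ)).symm (fun ij => (A + B) ij.1 ij.2)
      = (WithLp.equiv 2 ((m × n) → ℝ)).symm (fun ij => A ij.1 ij.2)
        + (WithLp.equiv 2 ((m × n) → ℝ)).symm (fun ij => B ij.1 ij.2) := rfl
  rw [h]
  exact norm_add_le _ _

end Helpers

private lemma memLR_sub {p n kr kc : ℕ} {P : Matrix (Fin p) (Fin kr) ℝ}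
    {Q : Matrix (Fin n) (Fin kc) ℝ} {X Y : Matrix (Fin p) (Fin n) ℝ}
    (hX : memLR P Q X) (hY : memLR P Q Y) : memLR P Q (X - Y) := by
  constructor
  · intro j
    obtain ⟨c1, hc1⟩ := hX.1 j
    obtain ⟨c2, hc2⟩ := hY.1 j
    exact ⟨c1 - c2, by funext i; simp [Matrix.sub_apply, Matrix.mulVec_sub,
      congrFun hc1 i, congrFun hc2 i]⟩
  · intro i
    obtain ⟨c1, hc1⟩ := hX.2 i
    obtain ⟨c2, hc2⟩ := hY.2 i
    exact ⟨c1 - c2, by funext j; simp [Matrix.sub_apply, Matrix.mulVec_sub,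
      congrFun hc1 j, congrFun hc2 j]⟩

/-- error bound for the ideal decoder. If the RIP holds and `X*` minimizes
`‖M_r X M_c − X̃‖_F²` over matrices in `LR(P_{k_r}, Q_{k_c})`, where
`X̃ = M_r X̄ M_c + Ẽ` with `X̄ ∈ LR(P_{k_r}, Q_{k_c})`, then
`‖X* − X̄‖_F ≤ 2 √(np/(ρ_c ρ_r (1−δ))) ‖Ẽ‖_F`. -/
theorem ideal_decoder_bound
    (p n ρr ρc kr kc : ℕ)
    (Mr : Matrix (Fin ρr) (Fin p) ℝ) (hMr : IsRowSelection Mr)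
    (Mc : Matrix (Fin n) (Fin ρc) ℝ) (hMc : IsColSelection Mc)
    (Pkr : Matrix (Fin p) (Fin kr) ℝ) (hP : Pkrᵀ * Pkr = 1)
    (Qkc : Matrix (Fin n) (Fin kc) ℝ) (hQ : Qkcᵀ * Qkc = 1)
    (δ : ℝ) (hδ : δ ∈ Set.Ioo (0 : ℝ) 1)
    (hRIP : ∀ Y : Matrix (Fin p) (Fin n) ℝ, memLR Pkr Qkc Y →
      (1 - δ) * (frobNorm Y) ^ 2 ≤
        ((n : ℝ) * p / ((ρr : ℝ) * ρc)) * (frobNorm (Mr * Y * Mc)) ^ 2 ∧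
      ((n : ℝ) * p / ((ρr : ℝ) * ρc)) * (frobNorm (Mr * Y * Mc)) ^ 2 ≤
        (1 + δ) * (frobNorm Y) ^ 2)
    (Xbar : Matrix (Fin p) (Fin n) ℝ) (hXbar : memLR Pkr Qkc Xbar)
    (Etil : Matrix (Fin ρr) (Fin ρc) ℝ)
    (Xtil : Matrix (Fin ρr) (Fin ρc) ℝ) (hXtil : Xtil = Mr * Xbar * Mc + Etil)
    (Xstar : Matrix (Fin p) (Fin n) ℝ) (hXstarLR : memLR Pkr Qkc Xstar)
    (hmin : ∀ X : Matrix (Fin p) (Fin n) ℝ, memLR Pkr Qkc X →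
      (frobNorm (Mr * Xstar * Mc - Xtil)) ^ 2 ≤ (frobNorm (Mr * X * Mc - Xtil)) ^ 2) :
    frobNorm (Xstar - Xbar) ≤
      2 * Real.sqrt ((n : ℝ) * p / ((ρc : ℝ) * ρr * (1 - δ))) * frobNorm Etil := by

  obtain ⟨hδ0, hδ1⟩ := hδ
  set c : ℝ := (n : ℝ) * p / ((ρr : ℝ) * ρc) with hc
  have hcnn : 0 ≤ c := by positivity
  set D : Matrix (Fin p) (Fin n) ℝ := Xstar - Xbar with hD
  have hDLR : memLR Pkr Qkc D := memLR_sub hXstarLR hXbar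
  -- key algebraic identity
  have hkey : Mr * Xstar * Mc - Xtil = Mr * D * Mc - Etil := by
    rw [hXtil, hD, Matrix.mul_sub, Matrix.sub_mul]
    abel
  -- minimality at Xbar
  have hminE : (frobNorm (Mr * D * Mc - Etil)) ^ 2 ≤ (frobNorm Etil) ^ 2 := by
    have := hmin Xbar hXbar
    rw [hkey] at this
    have h2 : Mr * Xbar * Mc - Xtil = -Etil := by rw [hXtil]; abel
    rwa [h2, frobNorm_neg] at this
  have hminE' : frobNorm (Mr * D * Mc - Etil) ≤ frobNorm Etil := by
    have h1 := frobNorm_nonneg (Mr * D * Mc - Etil)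
    have h2 := frobNorm_nonneg Etil
    nlinarith
  have htri : frobNorm (Mr * D * Mc) ≤ 2 * frobNorm Etil := by
    have : Mr * D * Mc = (Mr * D * Mc - Etil) + Etil := by abel
    calc frobNorm (Mr * D * Mc) = frobNorm ((Mr * D * Mc - Etil) + Etil) := by rw [← this]
      _ ≤ frobNorm (Mr * D * Mc - Etil) + frobNorm Etil := frobNorm_add_le _ _
      _ ≤ 2 * frobNorm Etil := by linarith
  have hRIPD := (hRIP D hDLR).1
  have hE2 : (frobNorm (Mr * D * Mc)) ^ 2 ≤ 4 * (frobNorm Etil) ^ 2 := by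
    have h1 := frobNorm_nonneg (Mr * D * Mc)
    nlinarith
  have hmain : (1 - δ) * (frobNorm D) ^ 2 ≤ c * (4 * (frobNorm Etil) ^ 2) := by
    calc (1 - δ) * (frobNorm D) ^ 2 ≤ c * (frobNorm (Mr * D * Mc)) ^ 2 := hRIPD
      _ ≤ c * (4 * (frobNorm Etil) ^ 2) := by
          apply mul_le_mul_of_nonneg_left hE2 hcnn
  have h1δ : 0 < 1 - δ := by linarith
  have hD2 : (frobNorm D) ^ 2 ≤ (2 * Real.sqrt (c / (1 - δ)) * frobNorm Etil) ^ 2 := by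
    have hsq : (Real.sqrt (c / (1 - δ))) ^ 2 = c / (1 - δ) :=
      Real.sq_sqrt (by positivity)
    have : (2 * Real.sqrt (c / (1 - δ)) * frobNorm Etil) ^ 2
        = 4 * (c / (1 - δ)) * (frobNorm Etil) ^ 2 := by
      rw [mul_pow, mul_pow, hsq]; ring
    rw [this]
    have hq : (frobNorm D) ^ 2 ≤ (c * (4 * (frobNorm Etil) ^ 2)) / (1 - δ) :=
      (le_div_iff₀ h1δ).mpr (by linarith [hmain])
    have heq2 : (c * (4 * (frobNorm Etil) ^ 2)) / (1 - δ)
        = 4 * (c / (1 - δ)) * (frobNorm Etil) ^ 2 := by ring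
    linarith [heq2 ▸ hq]
  have hfin : frobNorm D ≤ 2 * Real.sqrt (c / (1 - δ)) * frobNorm Etil := by
    have hr : 0 ≤ 2 * Real.sqrt (c / (1 - δ)) * frobNorm Etil := by
      have := frobNorm_nonneg Etil
      positivity
    calc frobNorm D = Real.sqrt ((frobNorm D) ^ 2) := by
          rw [Real.sqrt_sq (frobNorm_nonneg D)]
      _ ≤ Real.sqrt ((2 * Real.sqrt (c / (1 - δ)) * frobNorm Etil) ^ 2) :=
          Real.sqrt_le_sqrt hD2
      _ = _ := Real.sqrt_sq hr
  have heq : c / (1 - δ) = (n : ℝ) * p / ((ρc : ℝ) * ρr * (1 - δ)) := by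
    rw [hc, div_div]
    ring_nf
  rw [hD] at hfin
  rw [heq] at hfin
  exact hfin
end

section
/- Suppose M_r ∈ ℝ^{ρ_r×p} and M_c ∈ ℝ^{n×ρ_c} satisfy the RIP with constant δ ∈ (0,1): (1−δ)‖Y‖_F² ≤ (np/(ρ_r ρ_c)) ‖M_r Y M_c‖_F² ≤ (1+δ)‖Y‖_F² for all Y ∈ LR(P_{k_r}, Q_{k_c}). Assume λ_{k_c+1} > 0 and λ_{k_r+1} > 0, let γ > 0, and set γ̄_c = γ/λ_{k_c+1}, γ̄_r = γ/λ_{k_r+1}. Let X̄ ∈ LR(P_{k_r}, Q_{k_c}), Ẽ ∈ ℝ^{ρ_r×ρ_c}, X̃ = M_r X̄ M_c + Ẽ, and let X* be a minimizer over X ∈ ℝ^{p×n} of ‖M_r X M_c − X̃‖_F² + γ̄_c tr(X L_c X^⊤) + γ̄_r tr(X^⊤ L_r X). With X̄* = P_{k_r} P_{k_r}^⊤ X* Q_{k_c} Q_{k_c}^⊤ (the orthogonal projection of X* onto LR(P_{k_r}, Q_{k_c})), one has ‖X̄* − X̄‖_F ≤ √(np/(ρ_c ρ_r (1−δ))) [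 (2 + 1/√(2γ)) ‖Ẽ‖_F + (1/√2 + √γ) √(λ_{k_c}/λ_{k_c+1} + λ_{k_r}/λ_{k_r+1}) ‖X̄‖_F ]. -/
open Matrix

namespace AuxAlt

lemma le_of_sq_le_sq {a b : ℝ} (ha : 0 ≤ a) (hb : 0 ≤ b) (h : a ^ 2 ≤ b ^ 2) : a ≤ b := by
  nlinarith

lemma frobNorm_nonneg' {m n : Type*} [Fintype m] [Fintype n] (A : Matrix m n ℝ) :
    0 ≤ frobNorm A := Real.sqrt_nonneg _

lemma frobNorm_sq {m n : Type*} [Fintype m] [Fintype n] (A : Matrix m n ℝ) :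
    frobNorm A ^ 2 = ∑ i, ∑ j, (A i j) ^ 2 := by
  apply Real.sq_sqrt; positivity

lemma frobNorm_eq_norm {m n : Type*} [Fintype m] [Fintype n] (A : Matrix m n ℝ) :
    frobNorm A = ‖(WithLp.equiv 2 ((m × n) → ℝ)).symm (fun ij => A ij.1 ij.2)‖ := by
  rw [EuclideanSpace.norm_eq, frobNorm]
  congr 1
  rw [Fintype.sum_prod_type]
  refine Finset.sum_congr rfl fun i _ => Finset.sum_congr rfl fun j _ => ?_
  rw [Real.norm_eq_abs, sq_abs]; rfl

lemma frobNorm_triangle {m n : Type*} [Fintype m] [Fintype n] (A B : Matrix m n ℝ) :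
    frobNorm (A + B) ≤ frobNorm A + frobNorm B := by
  rw [frobNorm_eq_norm, frobNorm_eq_norm, frobNorm_eq_norm]
  have h : (WithLp.equiv 2 ((m × n) → ℝ)).symm (fun ij => (A + B) ij.1 ij.2)
      = (WithLp.equiv 2 ((m × n) → ℝ)).symm (fun ij => A ij.1 ij.2)
        + (WithLp.equiv 2 ((m × n) → ℝ)).symm (fun ij => B ij.1 ij.2) := rfl
  rw [h]
  exact norm_add_le _ _

lemma frobNorm_smul {m n : Type*} [Fintype m] [Fintype n] (c : ℝ) (A : Matrix m n ℝ) :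
    frobNorm (c • A) = |c| * frobNorm A := by
  rw [frobNorm_eq_norm, frobNorm_eq_norm]
  have h : (WithLp.equiv 2 ((m × n) → ℝ)).symm (fun ij => (c • A) ij.1 ij.2)
      = c • (WithLp.equiv 2 ((m × n) → ℝ)).symm (fun ij => A ij.1 ij.2) := rfl
  rw [h, norm_smul, Real.norm_eq_abs]

lemma frobNorm_sub_le {m n : Type*} [Fintype m] [Fintype n] (A B : Matrix m n ℝ) :
    frobNorm (A - B) ≤ frobNorm A + frobNorm B := by
  have h1 : A - B = A + (-1 : ℝ) • B := by rw [neg_one_smul, sub_eq_add_neg]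
  have h2 := frobNorm_triangle A ((-1 : ℝ) • B)
  rw [← h1, frobNorm_smul] at h2
  simpa using h2

lemma sum_expand {m n : Type*} [Fintype m] [Fintype n] (f g w : m → n → ℝ) (τ : ℝ) :
    ∑ i, ∑ j, (f i j + τ * g i j) ^ 2 * w i j
      = (∑ i, ∑ j, f i j ^ 2 * w i j) + 2 * τ * (∑ i, ∑ j, f i j * g i j * w i j)
        + τ ^ 2 * (∑ i, ∑ j, g i j ^ 2 * w i j) := by
  have h : ∀ i j, (f i j + τ * g i j) ^ 2 * w i j
      = f i j ^ 2 * w i j + (2 * τ) * (f i j * g i j * w i j)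
        + (τ ^ 2) * (g i j ^ 2 * w i j) := by intros; ring
  simp_rw [h, Finset.sum_add_distrib, ← Finset.mul_sum]

lemma sum_expand' {m n : Type*} [Fintype m] [Fintype n] (f g : m → n → ℝ) (τ : ℝ) :
    ∑ i, ∑ j, (f i j + τ * g i j) ^ 2
      = (∑ i, ∑ j, f i j ^ 2) + 2 * τ * (∑ i, ∑ j, f i j * g i j)
        + τ ^ 2 * (∑ i, ∑ j, g i j ^ 2) := by
  have h : ∀ i j, (f i j + τ * g i j) ^ 2
      = f i j ^ 2 + (2 * τ) * (f i j * g i j) + (τ ^ 2) * (g i j ^ 2) := by intros; ring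
  simp_rw [h, Finset.sum_add_distrib, ← Finset.mul_sum]

lemma trace_sum_diag_right {m n : Type*} [Fintype m] [Fintype n] [DecidableEq n]
    (M N : Matrix m n ℝ) (w : n → ℝ) :
    Matrix.trace (M * Matrix.diagonal w * Nᵀ) = ∑ i, ∑ j, M i j * N i j * w j := by
  have h : ∀ i, (M * Matrix.diagonal w * Nᵀ) i i = ∑ j, M i j * N i j * w j := by
    intro i
    rw [Matrix.mul_apply]
    refine Finset.sum_congr rfl fun j _ => ?_
    rw [Matrix.mul_diagonal, Matrix.transpose_apply]
    ring
  simp only [Matrix.trace, Matrix.diag]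
  exact Finset.sum_congr rfl fun i _ => h i

lemma trace_sum_diag_left {m n : Type*} [Fintype m] [Fintype n] [DecidableEq m]
    (M N : Matrix m n ℝ) (w : m → ℝ) :
    Matrix.trace (Mᵀ * Matrix.diagonal w * N) = ∑ i, ∑ j, M i j * N i j * w i := by
  have h : Mᵀ * Matrix.diagonal w * N = (Nᵀ * Matrix.diagonal w * Mᵀᵀ)ᵀ := by
    simp [Matrix.transpose_mul, Matrix.diagonal_transpose, Matrix.mul_assoc]
  rw [h, Matrix.trace_transpose, trace_sum_diag_right, Finset.sum_comm]
  refine Finset.sum_congr rfl fun i _ => Finset.sum_congr rfl fun j _ => ?_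
  simp only [Matrix.transpose_apply]
  ring

lemma inv_left {a b : Type*} [Fintype a] [Fintype b] [DecidableEq a] [DecidableEq b]
    (P : Matrix a a ℝ) (hPPT : P * Pᵀ = 1) (M N : Matrix a b ℝ) (w : b → ℝ) :
    ∑ i, ∑ j, (Pᵀ * M) i j * (Pᵀ * N) i j * w j = ∑ i, ∑ j, M i j * N i j * w j := by
  rw [← trace_sum_diag_right (Pᵀ * M) (Pᵀ * N) w, ← trace_sum_diag_right M N w]
  have h : (Pᵀ * M) * Matrix.diagonal w * (Pᵀ * N)ᵀ
      = Pᵀ * (M * Matrix.diagonal w * Nᵀ) * P := by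
    rw [Matrix.transpose_mul, Matrix.transpose_transpose]
    simp only [Matrix.mul_assoc]
  rw [h, Matrix.trace_mul_cycle, ← Matrix.mul_assoc, hPPT, Matrix.one_mul]

lemma inv_right {a b : Type*} [Fintype a] [Fintype b] [DecidableEq a] [DecidableEq b]
    (Q : Matrix b b ℝ) (hQQT : Q * Qᵀ = 1) (M N : Matrix a b ℝ) (w : a → ℝ) :
    ∑ i, ∑ j, (M * Q) i j * (N * Q) i j * w i = ∑ i, ∑ j, M i j * N i j * w i := by
  rw [← trace_sum_diag_left (M * Q) (N * Q) w, ← trace_sum_diag_left M N w]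
  have h : (M * Q)ᵀ * Matrix.diagonal w * (N * Q)
      = Qᵀ * (Mᵀ * Matrix.diagonal w * N) * Q := by
    rw [Matrix.transpose_mul]
    simp only [Matrix.mul_assoc]
  rw [h, Matrix.trace_mul_cycle, ← Matrix.mul_assoc, hQQT, Matrix.one_mul]

lemma quad_opt {c1 c2 : ℝ} (h2 : 0 ≤ c2)
    (h : ∀ τ : ℝ, c1 + c2 ≤ c1 * τ + c2 * τ ^ 2) : c1 + 2 * c2 ≤ 0 := by
  by_contra hlt
  push_neg at hlt
  have hc2 : (0:ℝ) < 2 * (c2 + 1) := by linarith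
  set t : ℝ := (c1 + 2 * c2) / (2 * (c2 + 1)) with ht
  have htpos : 0 < t := div_pos hlt hc2
  have h1 := h (1 - t)
  have key : (c1 + 2 * c2) * t ≤ c2 * t ^ 2 := by nlinarith
  have h5 : c1 + 2 * c2 ≤ c2 * t := by
    have h6 := mul_le_mul_of_nonneg_right key (le_of_lt (inv_pos.mpr htpos))
    calc c1 + 2 * c2 = (c1 + 2 * c2) * t * t⁻¹ := by field_simp
    _ ≤ c2 * t ^ 2 * t⁻¹ := h6
    _ = c2 * t := by field_simp
  have h7 : t * (2 * (c2 + 1)) = c1 + 2 * c2 := by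
    rw [ht]; field_simp
  nlinarith [mul_le_mul_of_nonneg_right h5 hc2.le]

lemma ind_mul_left {p kr N : ℕ} (E : Matrix (Fin p) (Fin kr) ℝ)
    (hE : ∀ a b, E a b = if (a : ℕ) = (b : ℕ) then 1 else 0)
    (V : Matrix (Fin kr) (Fin N) ℝ) (i : Fin p) (j : Fin N) :
    (E * V) i j = if h : (i : ℕ) < kr then V ⟨i, h⟩ j else 0 := by
  rw [Matrix.mul_apply]
  by_cases h : (i : ℕ) < kr
  · rw [dif_pos h]
    rw [Finset.sum_eq_single (⟨(i : ℕ), h⟩ : Fin kr)]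
    · rw [hE]; simp
    · intro b _ hb
      rw [hE, if_neg, zero_mul]
      intro hh
      exact hb (Fin.ext hh.symm)
    · simp
  · rw [dif_neg h]
    refine Finset.sum_eq_zero fun b _ => ?_
    rw [hE, if_neg, zero_mul]
    intro hh
    exact h (hh ▸ b.isLt)

lemma ind_mul_right {q kc N : ℕ} (E : Matrix (Fin kc) (Fin q) ℝ)
    (hE : ∀ a b, E a b = if (a : ℕ) = (b : ℕ) then 1 else 0)
    (V : Matrix (Fin N) (Fin kc) ℝ) (i : Fin N) (j : Fin q) :
    (V * E) i j = if h : (j : ℕ) < kc then V i ⟨j, h⟩ else 0 := by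
  rw [Matrix.mul_apply]
  by_cases h : (j : ℕ) < kc
  · rw [dif_pos h]
    rw [Finset.sum_eq_single (⟨(j : ℕ), h⟩ : Fin kc)]
    · rw [hE]; simp
    · intro b _ hb
      rw [hE, if_neg, mul_zero]
      intro hh
      exact hb (Fin.ext hh)
    · simp
  · rw [dif_neg h]
    refine Finset.sum_eq_zero fun b _ => ?_
    rw [hE, if_neg, mul_zero]
    intro hh
    exact h (hh ▸ b.isLt)

lemma sel_entry {ρr p n ρc : ℕ} {Mr : Matrix (Fin ρr) (Fin p) ℝ} {Mc : Matrix (Fin n) (Fin ρc) ℝ}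
    {f : Fin ρr → Fin p} {g : Fin ρc → Fin n}
    (hf : ∀ i j, Mr i j = if j = f i then 1 else 0)
    (hg : ∀ i j, Mc i j = if i = g j then 1 else 0)
    (Y : Matrix (Fin p) (Fin n) ℝ) (a : Fin ρr) (b : Fin ρc) :
    (Mr * Y * Mc) a b = Y (f a) (g b) := by
  have h1 : ∀ j, (Mr * Y) a j = Y (f a) j := by
    intro j
    rw [Matrix.mul_apply]
    simp_rw [hf]
    rw [Finset.sum_eq_single (f a)] <;> simp +contextual
  rw [Matrix.mul_apply]
  simp_rw [h1, hg]
  rw [Finset.sum_eq_single (g b)] <;> simp +contextual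

lemma sel_frob_le {ρr p n ρc : ℕ} {Mr : Matrix (Fin ρr) (Fin p) ℝ}
    {Mc : Matrix (Fin n) (Fin ρc) ℝ}
    (hMr : IsRowSelection Mr) (hMc : IsColSelection Mc) (Y : Matrix (Fin p) (Fin n) ℝ) :
    frobNorm (Mr * Y * Mc) ≤ frobNorm Y := by
  obtain ⟨f, hfinj, hf⟩ := hMr
  obtain ⟨g, hginj, hg⟩ := hMc
  apply Real.sqrt_le_sqrt
  have h1 : ∑ a, ∑ b, ((Mr * Y * Mc) a b) ^ 2 = ∑ q : Fin ρr × Fin ρc, (Y (f q.1) (g q.2)) ^ 2 := by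
    rw [Fintype.sum_prod_type]
    exact Finset.sum_congr rfl fun a _ => Finset.sum_congr rfl fun b _ => by
      rw [sel_entry hf hg]
  rw [h1]
  have h2 : ∑ q : Fin ρr × Fin ρc, (Y (f q.1) (g q.2)) ^ 2
      = ∑ q ∈ Finset.univ.image (Prod.map f g), (Y q.1 q.2) ^ 2 := by
    rw [Finset.sum_image]
    · rfl
    · intro x _ y _ hxy
      exact (hfinj.prodMap hginj) hxy
  rw [h2]
  calc ∑ q ∈ Finset.univ.image (Prod.map f g), (Y q.1 q.2) ^ 2
      ≤ ∑ q : Fin p × Fin n, (Y q.1 q.2) ^ 2 := by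
        apply Finset.sum_le_sum_of_subset_of_nonneg (Finset.subset_univ _)
        intros; positivity
  _ = ∑ i, ∑ j, (Y i j) ^ 2 := by rw [Fintype.sum_prod_type]

set_option maxHeartbeats 1000000 in
lemma scalar_main (γ e x s α β aM uW : ℝ)
    (hγ : 0 < γ) (he : 0 ≤ e) (hx : 0 ≤ x) (hs : 0 ≤ s)
    (hα : 0 ≤ α) (hβ : 0 ≤ β) (haM : 0 ≤ aM) (huW : 0 ≤ uW)
    (ham : aM ≤ α + e / 2) (huu : uW ≤ β / Real.sqrt γ)
    (hαβ : α ^ 2 + β ^ 2 ≤ (e ^ 2 + γ * s * x ^ 2) / 4) :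
    aM + uW ≤ (2 + 1 / Real.sqrt (2 * γ)) * e
      + (1 / Real.sqrt 2 + Real.sqrt γ) * (Real.sqrt s * x) := by
  set g := Real.sqrt γ with hg
  set σ := Real.sqrt s with hσ
  set c := Real.sqrt (1 + 1 / γ) with hc
  have hgpos : 0 < g := Real.sqrt_pos.mpr hγ
  have hg2 : g ^ 2 = γ := Real.sq_sqrt hγ.le
  have hσ_nn : 0 ≤ σ := Real.sqrt_nonneg _
  have hσ2 : σ ^ 2 = s := Real.sq_sqrt hs
  have hc_nn : 0 ≤ c := Real.sqrt_nonneg _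
  have hc2s : c ^ 2 = 1 + 1 / γ := Real.sq_sqrt (by positivity)
  have hy_nn : 0 ≤ g * σ * x := mul_nonneg (mul_nonneg hgpos.le hσ_nn) hx
  have hcs : α + β / g ≤ c * Real.sqrt (α ^ 2 + β ^ 2) := by
    apply le_of_sq_le_sq (add_nonneg hα (div_nonneg hβ hgpos.le))
      (mul_nonneg hc_nn (Real.sqrt_nonneg _))
    have hsq2 : (c * Real.sqrt (α ^ 2 + β ^ 2)) ^ 2 = (1 + 1 / γ) * (α ^ 2 + β ^ 2) := by
      rw [mul_pow, hc2s, Real.sq_sqrt (by positivity)]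
    rw [hsq2]
    have e3 : (α * g + β) ^ 2 ≤ (g ^ 2 + 1) * (α ^ 2 + β ^ 2) := by
      nlinarith [sq_nonneg (α - β * g)]
    have e1 : (α + β / g) ^ 2 * g ^ 2 = (α * g + β) ^ 2 := by
      field_simp
    have e2 : (1 + 1 / γ) * (α ^ 2 + β ^ 2) * g ^ 2 = (g ^ 2 + 1) * (α ^ 2 + β ^ 2) := by
      rw [← hg2]; field_simp
    have e4 : (α + β / g) ^ 2 * g ^ 2 ≤ (1 + 1 / γ) * (α ^ 2 + β ^ 2) * g ^ 2 := by
      rw [e1, e2]; exact e3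
    exact le_of_mul_le_mul_right e4 (by positivity)
  have hRb : Real.sqrt (α ^ 2 + β ^ 2) ≤ (e + g * σ * x) / 2 := by
    have hgs : (g * σ * x) ^ 2 = γ * s * x ^ 2 := by
      rw [mul_pow, mul_pow, hg2, hσ2]
    have h1 : α ^ 2 + β ^ 2 ≤ ((e + g * σ * x) / 2) ^ 2 := by
      nlinarith [hαβ, hgs, mul_nonneg he hy_nn]
    calc Real.sqrt (α ^ 2 + β ^ 2) ≤ Real.sqrt (((e + g * σ * x) / 2) ^ 2) :=
        Real.sqrt_le_sqrt h1
    _ = (e + g * σ * x) / 2 := Real.sqrt_sq (by positivity)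
  have hau : aM + uW ≤ e / 2 + c * ((e + g * σ * x) / 2) := by
    have t1 : α + β / g ≤ c * ((e + g * σ * x) / 2) :=
      le_trans hcs (mul_le_mul_of_nonneg_left hRb hc_nn)
    have t2 : uW ≤ β / g := huu
    linarith
  have hs2 : Real.sqrt 2 * Real.sqrt 2 = 2 := Real.mul_self_sqrt (by norm_num)
  have hs2pos : (0:ℝ) < Real.sqrt 2 := by positivity
  have hcb1 : c ≤ 3 + Real.sqrt 2 / g := by
    apply le_of_sq_le_sq hc_nn (by positivity)
    rw [hc2s]
    have ht2 : (Real.sqrt 2 / g) ^ 2 = 2 * (1 / g ^ 2) := by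
      rw [div_pow, Real.sq_sqrt (by norm_num : (0:ℝ) ≤ 2)]
      ring
    have h1γ : 1 / γ = 1 / g ^ 2 := by rw [hg2]
    rw [h1γ]
    have htn : 0 ≤ Real.sqrt 2 / g := by positivity
    have hin : 0 ≤ 1 / g ^ 2 := by positivity
    have hex : (3 + Real.sqrt 2 / g) ^ 2
        = 9 + 6 * (Real.sqrt 2 / g) + (Real.sqrt 2 / g) ^ 2 := by ring
    rw [hex, ht2]
    have key : ∀ t X : ℝ, 0 ≤ t → 0 ≤ X → 1 + X ≤ 9 + 6 * t + 2 * X := by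
      intro t X ht hX; linarith
    exact key _ _ htn hin
  have hcb2 : c * g ≤ Real.sqrt 2 + 2 * g := by
    apply le_of_sq_le_sq (mul_nonneg hc_nn hgpos.le) (by positivity)
    have h1 : (c * g) ^ 2 = γ + 1 := by
      rw [mul_pow, hc2s, hg2]; field_simp
    rw [h1]
    have hex : (Real.sqrt 2 + 2 * g) ^ 2
        = Real.sqrt 2 * Real.sqrt 2 + 4 * (Real.sqrt 2 * g) + 4 * g ^ 2 := by ring
    rw [hex, hs2]
    have h5 : 0 ≤ Real.sqrt 2 * g := mul_nonneg hs2pos.le hgpos.le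
    have h6 : γ = g ^ 2 := hg2.symm
    nlinarith [sq_nonneg g]
  have h2γ : Real.sqrt (2 * γ) = Real.sqrt 2 * g := by
    rw [hg]; exact Real.sqrt_mul (by norm_num) γ
  have hA : Real.sqrt 2 / g = 2 * (1 / (Real.sqrt 2 * g)) := by
    have hh : Real.sqrt 2 * (Real.sqrt 2 * g) = 2 * g := by rw [← mul_assoc, hs2]
    field_simp
    linarith [hh]
  have hB : Real.sqrt 2 = 2 * (1 / Real.sqrt 2) := by
    field_simp
    exact Real.sq_sqrt (by norm_num)
  have hcoefA : 1 / 2 + c / 2 ≤ 2 + 1 / (Real.sqrt 2 * g) := by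
    have h1 := hcb1
    rw [hA] at h1
    have hinv_nn : 0 ≤ 1 / (Real.sqrt 2 * g) := by positivity
    linarith
  have hcoefB : c * g / 2 ≤ 1 / Real.sqrt 2 + g := by
    have h1 := hcb2
    rw [hB] at h1
    linarith
  have hinner : e / 2 + c * ((e + g * σ * x) / 2)
      ≤ (2 + 1 / Real.sqrt (2 * γ)) * e + (1 / Real.sqrt 2 + g) * (σ * x) := by
    rw [h2γ]
    have hL : e / 2 + c * ((e + g * σ * x) / 2)
        = (1 / 2 + c / 2) * e + (c * g / 2) * (σ * x) := by ring
    rw [hL]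
    have hyx_nn : 0 ≤ σ * x := mul_nonneg hσ_nn hx
    exact add_le_add (mul_le_mul_of_nonneg_right hcoefA he)
      (mul_le_mul_of_nonneg_right hcoefB hyx_nn)
  linarith [hau, hinner]

end AuxAlt

set_option maxHeartbeats 2000000 in
/-- error bound `‖X̄* − X̄‖_F` for the alternate (graph-Dirichlet) decoder. -/
theorem alternate_decoder_bound
    (p n ρr ρc kr kc : ℕ) (hkr0 : 0 < kr) (hkr : kr < p) (hkc0 : 0 < kc) (hkc : kc < n)
    (Lr : Matrix (Fin p) (Fin p) ℝ) (Lc : Matrix (Fin n) (Fin n) ℝ)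
    (hLr : Lr.PosSemidef) (hLc : Lc.PosSemidef)
    (evr : Fin p → ℝ) (evc : Fin n → ℝ) (hevr : Monotone evr) (hevc : Monotone evc)
    (P : Matrix (Fin p) (Fin p) ℝ) (Q : Matrix (Fin n) (Fin n) ℝ)
    (hPorth : Pᵀ * P = 1) (hQorth : Qᵀ * Q = 1)
    (hLrP : Lr * P = P * Matrix.diagonal evr)
    (hLcQ : Lc * Q = Q * Matrix.diagonal evc)
    (Pkr : Matrix (Fin p) (Fin kr) ℝ) (hPkr : Pkr = P.submatrix id (Fin.castLE hkr.le))
    (Qkc : Matrix (Fin n) (Fin kc) ℝ) (hQkc : Qkc = Q.submatrix id (Fin.castLE hkc.le))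
    (Mr : Matrix (Fin ρr) (Fin p) ℝ) (hMr : IsRowSelection Mr)
    (Mc : Matrix (Fin n) (Fin ρc) ℝ) (hMc : IsColSelection Mc)
    (δ : ℝ) (hδ : δ ∈ Set.Ioo (0 : ℝ) 1)
    (hRIP : ∀ Y : Matrix (Fin p) (Fin n) ℝ, memLR Pkr Qkc Y →
      (1 - δ) * (frobNorm Y) ^ 2 ≤
        ((n : ℝ) * p / ((ρr : ℝ) * ρc)) * (frobNorm (Mr * Y * Mc)) ^ 2 ∧
      ((n : ℝ) * p / ((ρr : ℝ) * ρc)) * (frobNorm (Mr * Y * Mc)) ^ 2 ≤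
        (1 + δ) * (frobNorm Y) ^ 2)
    (hlamc1 : 0 < evc ⟨kc, hkc⟩) (hlamr1 : 0 < evr ⟨kr, hkr⟩)
    (γ γc γr : ℝ) (hγ : 0 < γ)
    (hγc : γc = γ / evc ⟨kc, hkc⟩) (hγr : γr = γ / evr ⟨kr, hkr⟩)
    (Xbar : Matrix (Fin p) (Fin n) ℝ) (hXbar : memLR Pkr Qkc Xbar)
    (Etil : Matrix (Fin ρr) (Fin ρc) ℝ)
    (Xtil : Matrix (Fin ρr) (Fin ρc) ℝ) (hXtil : Xtil = Mr * Xbar * Mc + Etil)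
    (Xstar : Matrix (Fin p) (Fin n) ℝ)
    (hmin : ∀ X : Matrix (Fin p) (Fin n) ℝ,
      (frobNorm (Mr * Xstar * Mc - Xtil)) ^ 2 + γc * Matrix.trace (Xstar * Lc * Xstarᵀ)
        + γr * Matrix.trace (Xstarᵀ * Lr * Xstar) ≤
      (frobNorm (Mr * X * Mc - Xtil)) ^ 2 + γc * Matrix.trace (X * Lc * Xᵀ)
        + γr * Matrix.trace (Xᵀ * Lr * X))
    (Xbarstar : Matrix (Fin p) (Fin n) ℝ)
    (hXbarstar : Xbarstar = Pkr * Pkrᵀ * Xstar * (Qkc * Qkcᵀ)) :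
    frobNorm (Xbarstar - Xbar) ≤
      Real.sqrt ((n : ℝ) * p / ((ρc : ℝ) * ρr * (1 - δ))) *
        ((2 + 1 / Real.sqrt (2 * γ)) * frobNorm Etil +
          (1 / Real.sqrt 2 + Real.sqrt γ) *
            Real.sqrt (evc ⟨kc - 1, by omega⟩ / evc ⟨kc, hkc⟩
              + evr ⟨kr - 1, by omega⟩ / evr ⟨kr, hkr⟩) * frobNorm Xbar) := by
  classical
  obtain ⟨hδ0, hδ1⟩ := hδ
  have h1δ : (0:ℝ) < 1 - δ := by linarith
  have hPPT : P * Pᵀ = 1 := mul_eq_one_comm.mp hPorth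
  have hQQT : Q * Qᵀ = 1 := mul_eq_one_comm.mp hQorth
  have hLce : Lc = Q * Matrix.diagonal evc * Qᵀ := by
    rw [← hLcQ, Matrix.mul_assoc, hQQT, Matrix.mul_one]
  have hLre : Lr = P * Matrix.diagonal evr * Pᵀ := by
    rw [← hLrP, Matrix.mul_assoc, hPPT, Matrix.mul_one]
  -- eigenvalue nonnegativity
  have evc_nn : ∀ j, 0 ≤ evc j := by
    intro j
    have h1 : Qᵀ * Lc * Q = Matrix.diagonal evc := by
      rw [Matrix.mul_assoc, hLcQ, ← Matrix.mul_assoc, hQorth, Matrix.one_mul]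
    have h2 : evc j = (Qᵀ * Lc * Q) j j := by
      rw [h1, Matrix.diagonal_apply_eq]
    have h3 : (Qᵀ * Lc * Q) j j = (fun i => Q i j) ⬝ᵥ Lc.mulVec (fun i => Q i j) := by
      simp only [Matrix.mul_apply, Matrix.transpose_apply, dotProduct, Matrix.mulVec,
        Finset.sum_mul, Finset.mul_sum]
      rw [Finset.sum_comm]
      exact Finset.sum_congr rfl fun a _ => Finset.sum_congr rfl fun b _ => by ring
    have h4 : 0 ≤ (fun i => Q i j) ⬝ᵥ Lc.mulVec (fun i => Q i j) := by
      simpa using hLc.dotProduct_mulVec_nonneg (fun i => Q i j)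
    rw [h2, h3]; exact h4
  have evr_nn : ∀ i, 0 ≤ evr i := by
    intro j
    have h1 : Pᵀ * Lr * P = Matrix.diagonal evr := by
      rw [Matrix.mul_assoc, hLrP, ← Matrix.mul_assoc, hPorth, Matrix.one_mul]
    have h2 : evr j = (Pᵀ * Lr * P) j j := by
      rw [h1, Matrix.diagonal_apply_eq]
    have h3 : (Pᵀ * Lr * P) j j = (fun i => P i j) ⬝ᵥ Lr.mulVec (fun i => P i j) := by
      simp only [Matrix.mul_apply, Matrix.transpose_apply, dotProduct, Matrix.mulVec,
        Finset.sum_mul, Finset.mul_sum]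
      rw [Finset.sum_comm]
      exact Finset.sum_congr rfl fun a _ => Finset.sum_congr rfl fun b _ => by ring
    have h4 : 0 ≤ (fun i => P i j) ⬝ᵥ Lr.mulVec (fun i => P i j) := by
      simpa using hLr.dotProduct_mulVec_nonneg (fun i => P i j)
    rw [h2, h3]; exact h4
  have hγcpos : 0 < γc := by rw [hγc]; positivity
  have hγrpos : 0 < γr := by rw [hγr]; positivity
  -- orthonormality of the truncated bases
  have hPkrO : Pkrᵀ * Pkr = 1 := by
    ext a b
    have h1 : (Pkrᵀ * Pkr) a b = (Pᵀ * P) (Fin.castLE hkr.le a) (Fin.castLE hkr.le b) := by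
      rw [hPkr]; simp [Matrix.mul_apply, Matrix.submatrix_apply]
    rw [h1, hPorth]
    simp [Matrix.one_apply, Fin.ext_iff]
  have hQkcO : Qkcᵀ * Qkc = 1 := by
    ext a b
    have h1 : (Qkcᵀ * Qkc) a b = (Qᵀ * Q) (Fin.castLE hkc.le a) (Fin.castLE hkc.le b) := by
      rw [hQkc]; simp [Matrix.mul_apply, Matrix.submatrix_apply]
    rw [h1, hQorth]
    simp [Matrix.one_apply, Fin.ext_iff]
  -- indicator entries
  have hErdef : ∀ (a : Fin p) (b : Fin kr),
      (Pᵀ * Pkr) a b = if (a : ℕ) = (b : ℕ) then 1 else 0 := by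
    intro a b
    have h1 : (Pᵀ * Pkr) a b = (Pᵀ * P) a (Fin.castLE hkr.le b) := by
      rw [hPkr]; simp [Matrix.mul_apply, Matrix.submatrix_apply]
    rw [h1, hPorth, Matrix.one_apply]
    simp [Fin.ext_iff]
  have hEcdef : ∀ (a : Fin kc) (b : Fin n),
      (Qkcᵀ * Q) a b = if (a : ℕ) = (b : ℕ) then 1 else 0 := by
    intro a b
    have h1 : (Qkcᵀ * Q) a b = (Qᵀ * Q) (Fin.castLE hkc.le a) b := by
      rw [hQkc]; simp [Matrix.mul_apply, Matrix.submatrix_apply]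
    rw [h1, hQorth, Matrix.one_apply]
    simp [Fin.ext_iff, eq_comm]
  -- general masking identity
  have hmaskgen : ∀ (Z : Matrix (Fin p) (Fin n) ℝ) (i : Fin p) (j : Fin n),
      (Pᵀ * (Pkr * Pkrᵀ * Z * (Qkc * Qkcᵀ)) * Q) i j
        = if (i : ℕ) < kr ∧ (j : ℕ) < kc then (Pᵀ * Z * Q) i j else 0 := by
    intro Z i j
    have hstep : Pᵀ * (Pkr * Pkrᵀ * Z * (Qkc * Qkcᵀ)) * Q
        = (Pᵀ * Pkr) * ((Pkrᵀ * Z * Qkc) * (Qkcᵀ * Q)) := by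
      simp only [Matrix.mul_assoc]
    have hmid : ∀ (hi : (i : ℕ) < kr) (hj : (j : ℕ) < kc),
        (Pkrᵀ * Z * Qkc) ⟨(i : ℕ), hi⟩ ⟨(j : ℕ), hj⟩ = (Pᵀ * Z * Q) i j := by
      intro hi hj
      rw [hPkr, hQkc]
      simp [Matrix.mul_apply, Matrix.submatrix_apply, Matrix.transpose_apply, Fin.castLE_mk]
    rw [hstep, AuxAlt.ind_mul_left _ hErdef]
    by_cases hi : (i : ℕ) < kr
    · rw [dif_pos hi, AuxAlt.ind_mul_right _ hEcdef]
      by_cases hj : (j : ℕ) < kc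
      · rw [dif_pos hj, if_pos ⟨hi, hj⟩]
        exact hmid hi hj
      · rw [dif_neg hj, if_neg (fun hcon => hj hcon.2)]
    · rw [dif_neg hi, if_neg (fun hcon => hi hcon.1)]
  -- Xbar is fixed by the projection
  obtain ⟨hcols, hrows⟩ := hXbar
  have hXbarP : Pkr * Pkrᵀ * Xbar * (Qkc * Qkcᵀ) = Xbar := by
    have hXC : Xbar = Pkr * (Matrix.of fun a j => (hcols j).choose a) := by
      ext i j
      have h2 : Xbar i j = Pkr.mulVec ((hcols j).choose) i := congrFun (hcols j).choose_spec i
      rw [h2]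
      simp [Matrix.mulVec, dotProduct, Matrix.mul_apply]
    have hXR : Xbar = (Matrix.of fun i b => (hrows i).choose b) * Qkcᵀ := by
      ext i j
      have h2 : Xbar i j = Qkc.mulVec ((hrows i).choose) j := congrFun (hrows i).choose_spec j
      rw [h2]
      simp [Matrix.mulVec, dotProduct, Matrix.mul_apply, mul_comm]
    have h1 : Pkr * Pkrᵀ * Xbar = Xbar := by
      conv_lhs => rw [hXC]
      rw [Matrix.mul_assoc Pkr Pkrᵀ _, ← Matrix.mul_assoc Pkrᵀ Pkr _, hPkrO, Matrix.one_mul]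
      exact hXC.symm
    have h2 : Xbar * (Qkc * Qkcᵀ) = Xbar := by
      conv_lhs => rw [hXR]
      rw [Matrix.mul_assoc, ← Matrix.mul_assoc Qkcᵀ Qkc Qkcᵀ, hQkcO, Matrix.one_mul]
      exact hXR.symm
    rw [h1, h2]
  -- abbreviations
  set lc0 : ℝ := evc ⟨kc - 1, by omega⟩ with hlc0
  set lr0 : ℝ := evr ⟨kr - 1, by omega⟩ with hlr0
  set lc1 : ℝ := evc ⟨kc, hkc⟩ with hlc1
  set lr1 : ℝ := evr ⟨kr, hkr⟩ with hlr1
  set s : ℝ := lc0 / lc1 + lr0 / lr1 with hs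
  have hs_nn : 0 ≤ s := by
    have h1 : 0 ≤ lc0 := by rw [hlc0]; exact evc_nn _
    have h2 : 0 ≤ lr0 := by rw [hlr0]; exact evr_nn _
    rw [hs]
    exact add_nonneg (div_nonneg h1 hlamc1.le) (div_nonneg h2 hlamr1.le)
  set D : Matrix (Fin p) (Fin n) ℝ := Xstar - Xbar with hD
  set m : Matrix (Fin ρr) (Fin ρc) ℝ := Mr * D * Mc with hm
  set hatB : Matrix (Fin p) (Fin n) ℝ := Pᵀ * Xbar * Q with hhatB
  set hatC : Matrix (Fin p) (Fin n) ℝ := Pᵀ * Xstar * Q with hhatC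
  set w : Fin p → Fin n → ℝ := fun i j => γc * evc j + γr * evr i with hw
  have hatD : Pᵀ * D * Q = hatC - hatB := by
    rw [hD, Matrix.mul_sub, Matrix.sub_mul, hhatB, hhatC]
  -- weight function facts
  have hw_nn : ∀ i j, 0 ≤ w i j := by
    intro i j
    have := evc_nn j; have := evr_nn i
    have h1 : 0 ≤ γc * evc j := by positivity
    have h2 : 0 ≤ γr * evr i := by positivity
    simp only [hw]; linarith
  have hw_off : ∀ (i : Fin p) (j : Fin n), ¬((i : ℕ) < kr ∧ (j : ℕ) < kc) → γ ≤ w i j := by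
    intro i j hij
    simp only [hw]
    rcases not_and_or.mp hij with h | h
    · push_neg at h
      have h1 : evr ⟨kr, hkr⟩ ≤ evr i := hevr (by rw [Fin.le_def]; simpa using h)
      have h2 : γr * lr1 = γ := by rw [hγr]; field_simp
      have h3 : 0 ≤ γc * evc j := mul_nonneg hγcpos.le (evc_nn j)
      have h4 : γr * lr1 ≤ γr * evr i := mul_le_mul_of_nonneg_left h1 hγrpos.le
      linarith only [h2, h3, h4]
    · push_neg at h
      have h1 : evc ⟨kc, hkc⟩ ≤ evc j := hevc (by rw [Fin.le_def]; simpa using h)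
      have h2 : γc * lc1 = γ := by rw [hγc]; field_simp
      have h3 : 0 ≤ γr * evr i := mul_nonneg hγrpos.le (evr_nn i)
      have h4 : γc * lc1 ≤ γc * evc j := mul_le_mul_of_nonneg_left h1 hγcpos.le
      linarith only [h2, h3, h4]
  have hw_box : ∀ (i : Fin p) (j : Fin n), (i : ℕ) < kr → (j : ℕ) < kc → w i j ≤ γ * s := by
    intro i j hi hj
    simp only [hw]
    have h1 : evc j ≤ lc0 := by
      rw [hlc0]; exact hevc (by rw [Fin.le_def]; simp; omega)
    have h2 : evr i ≤ lr0 := by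
      rw [hlr0]; exact hevr (by rw [Fin.le_def]; simp; omega)
    have e1 : γc * lc0 = γ * (lc0 / lc1) := by rw [hγc]; ring
    have e2 : γr * lr0 = γ * (lr0 / lr1) := by rw [hγr]; ring
    have h3 : γc * evc j ≤ γc * lc0 := mul_le_mul_of_nonneg_left h1 hγcpos.le
    have h4 : γr * evr i ≤ γr * lr0 := mul_le_mul_of_nonneg_left h2 hγrpos.le
    rw [hs]
    rw [mul_add]
    linarith only [h3, h4, e1.le, e1.ge, e2.le, e2.ge]
  -- masks
  have hmaskXbs : ∀ i j, (Pᵀ * Xbarstar * Q) i j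
      = if (i : ℕ) < kr ∧ (j : ℕ) < kc then hatC i j else 0 := by
    intro i j
    rw [hXbarstar]
    exact hmaskgen Xstar i j
  have hBoff : ∀ (i : Fin p) (j : Fin n), ¬((i : ℕ) < kr ∧ (j : ℕ) < kc) → hatB i j = 0 := by
    intro i j hij
    have h := hmaskgen Xbar i j
    rw [hXbarP] at h
    rw [hhatB, h, if_neg hij]
  -- energy form
  have hEn : ∀ A B : Matrix (Fin p) (Fin n) ℝ,
      γc * Matrix.trace (A * Lc * Bᵀ) + γr * Matrix.trace (Aᵀ * Lr * B)
        = ∑ i, ∑ j, (Pᵀ * A * Q) i j * (Pᵀ * B * Q) i j * w i j := by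
    intro A B
    have e1 : A * Lc * Bᵀ = (A * Q) * Matrix.diagonal evc * (B * Q)ᵀ := by
      rw [hLce, Matrix.transpose_mul]
      simp only [Matrix.mul_assoc]
    have e2 : Aᵀ * Lr * B = (Pᵀ * A)ᵀ * Matrix.diagonal evr * (Pᵀ * B) := by
      rw [hLre, Matrix.transpose_mul, Matrix.transpose_transpose]
      simp only [Matrix.mul_assoc]
    rw [e1, e2, AuxAlt.trace_sum_diag_right, AuxAlt.trace_sum_diag_left]
    have e3 : ∑ i, ∑ j, (A * Q) i j * (B * Q) i j * evc j
        = ∑ i, ∑ j, (Pᵀ * A * Q) i j * (Pᵀ * B * Q) i j * evc j := by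
      rw [← AuxAlt.inv_left P hPPT (A * Q) (B * Q) evc]
      simp only [Matrix.mul_assoc]
    have e4 : ∑ i, ∑ j, (Pᵀ * A) i j * (Pᵀ * B) i j * evr i
        = ∑ i, ∑ j, (Pᵀ * A * Q) i j * (Pᵀ * B * Q) i j * evr i := by
      rw [← AuxAlt.inv_right Q hQQT (Pᵀ * A) (Pᵀ * B) evr]
    rw [e3, e4]
    simp only [hw]
    simp_rw [Finset.mul_sum, ← Finset.sum_add_distrib]
    exact Finset.sum_congr rfl fun i _ => Finset.sum_congr rfl fun j _ => by ring
  -- isometry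
  have hIso : ∀ A : Matrix (Fin p) (Fin n) ℝ,
      ∑ i, ∑ j, ((Pᵀ * A * Q) i j) ^ 2 = ∑ i, ∑ j, (A i j) ^ 2 := by
    intro A
    have h1 := AuxAlt.inv_left P hPPT (A * Q) (A * Q) (fun _ => (1:ℝ))
    have h2 := AuxAlt.inv_right Q hQQT A A (fun _ => (1:ℝ))
    simp only [mul_one] at h1 h2
    calc ∑ i, ∑ j, ((Pᵀ * A * Q) i j) ^ 2
        = ∑ i, ∑ j, (Pᵀ * (A * Q)) i j * (Pᵀ * (A * Q)) i j := by
          simp only [pow_two, Matrix.mul_assoc]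
    _ = ∑ i, ∑ j, (A * Q) i j * (A * Q) i j := h1
    _ = ∑ i, ∑ j, A i j * A i j := h2
    _ = ∑ i, ∑ j, (A i j) ^ 2 := by simp only [pow_two]
  -- scalar quantities
  set Sm : ℝ := ∑ i, ∑ j, (m i j) ^ 2 with hSm
  set SE : ℝ := ∑ i, ∑ j, (Etil i j) ^ 2 with hSE
  set ipmE : ℝ := ∑ i, ∑ j, m i j * Etil i j with hipmE
  set eB : ℝ := ∑ i, ∑ j, ((hatC - hatB) i j) * hatB i j * w i j with heBX
  set eD : ℝ := ∑ i, ∑ j, ((hatC - hatB) i j) ^ 2 * w i j with heD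
  set eBB : ℝ := ∑ i, ∑ j, (hatB i j) ^ 2 * w i j with heBB
  have heD_nn : 0 ≤ eD := by
    refine Finset.sum_nonneg fun i _ => Finset.sum_nonneg fun j _ => ?_
    have := hw_nn i j; positivity
  have heBB_nn : 0 ≤ eBB := by
    refine Finset.sum_nonneg fun i _ => Finset.sum_nonneg fun j _ => ?_
    have := hw_nn i j; positivity
  -- the main optimality inequality
  have hXsD : Xstar = Xbar + D := by rw [hD]; abel
  have hsamp : ∀ τ : ℝ, Mr * (Xbar + τ • D) * Mc - Xtil = τ • m - Etil := by
    intro τ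
    rw [hXtil, hm]
    simp only [Matrix.mul_add, Matrix.add_mul, Matrix.mul_smul, Matrix.smul_mul]
    abel
  have hFrob : ∀ τ : ℝ, frobNorm (τ • m - Etil) ^ 2 = SE - 2 * τ * ipmE + τ ^ 2 * Sm := by
    intro τ
    rw [AuxAlt.frobNorm_sq]
    have hpt : ∀ (i : Fin ρr) (j : Fin ρc), (τ • m - Etil) i j = (-Etil) i j + τ * m i j := by
      intro i j
      simp only [Matrix.sub_apply, Matrix.smul_apply, Matrix.neg_apply, smul_eq_mul]
      ring
    calc ∑ i, ∑ j, ((τ • m - Etil) i j) ^ 2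
        = ∑ i, ∑ j, ((-Etil) i j + τ * m i j) ^ 2 :=
          Finset.sum_congr rfl fun i _ => Finset.sum_congr rfl fun j _ => by rw [hpt]
    _ = (∑ i, ∑ j, ((-Etil) i j) ^ 2) + 2 * τ * (∑ i, ∑ j, (-Etil) i j * m i j)
          + τ ^ 2 * (∑ i, ∑ j, (m i j) ^ 2) := AuxAlt.sum_expand' _ _ τ
    _ = SE - 2 * τ * ipmE + τ ^ 2 * Sm := by
        have e1 : ∑ i, ∑ j, ((-Etil) i j) ^ 2 = SE := by
          rw [hSE]
          exact Finset.sum_congr rfl fun i _ => Finset.sum_congr rfl fun j _ => by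
            rw [Matrix.neg_apply]; ring
        have e2 : ∑ i, ∑ j, (-Etil) i j * m i j = -ipmE := by
          rw [hipmE, ← Finset.sum_neg_distrib]
          refine Finset.sum_congr rfl fun i _ => ?_
          rw [← Finset.sum_neg_distrib]
          exact Finset.sum_congr rfl fun j _ => by rw [Matrix.neg_apply]; ring
        rw [e1, e2]; ring
  have hEnt : ∀ τ : ℝ, γc * Matrix.trace ((Xbar + τ • D) * Lc * (Xbar + τ • D)ᵀ)
      + γr * Matrix.trace ((Xbar + τ • D)ᵀ * Lr * (Xbar + τ • D))
      = eBB + 2 * τ * eB + τ ^ 2 * eD := by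
    intro τ
    rw [hEn]
    have hmat : Pᵀ * (Xbar + τ • D) * Q = hatB + τ • (hatC - hatB) := by
      rw [← hatD, hhatB]
      simp only [Matrix.mul_add, Matrix.add_mul, Matrix.mul_smul, Matrix.smul_mul]
    have hpt : ∀ i j, (Pᵀ * (Xbar + τ • D) * Q) i j = hatB i j + τ * (hatC - hatB) i j := by
      intro i j
      rw [hmat]
      simp only [Matrix.add_apply, Matrix.smul_apply, smul_eq_mul]
    calc ∑ i, ∑ j, (Pᵀ * (Xbar + τ • D) * Q) i j * (Pᵀ * (Xbar + τ • D) * Q) i j * w i j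
        = ∑ i, ∑ j, (hatB i j + τ * (hatC - hatB) i j) ^ 2 * w i j :=
          Finset.sum_congr rfl fun i _ => Finset.sum_congr rfl fun j _ => by
            rw [hpt]; ring
    _ = (∑ i, ∑ j, (hatB i j) ^ 2 * w i j)
          + 2 * τ * (∑ i, ∑ j, hatB i j * (hatC - hatB) i j * w i j)
          + τ ^ 2 * (∑ i, ∑ j, ((hatC - hatB) i j) ^ 2 * w i j) :=
          AuxAlt.sum_expand _ _ w τ
    _ = eBB + 2 * τ * eB + τ ^ 2 * eD := by
        have e1 : ∑ i, ∑ j, hatB i j * (hatC - hatB) i j * w i j = eB := by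
          rw [heBX]
          exact Finset.sum_congr rfl fun i _ => Finset.sum_congr rfl fun j _ => by ring
        rw [e1, ← heBB, ← heD]
  have hSm_nn : 0 ≤ Sm := by
    rw [hSm]
    refine Finset.sum_nonneg fun i _ => Finset.sum_nonneg fun j _ => by positivity
  have hquad : ∀ τ : ℝ, (2 * eB - 2 * ipmE) + (Sm + eD)
      ≤ (2 * eB - 2 * ipmE) * τ + (Sm + eD) * τ ^ 2 := by
    intro τ
    have h := hmin (Xbar + τ • D)
    rw [hsamp τ] at h
    rw [hXsD] at h
    have hXs1 : Xbar + D = Xbar + (1:ℝ) • D := by rw [one_smul]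
    rw [hXs1, hsamp 1] at h
    have hf1 := hFrob 1
    have hfτ := hFrob τ
    have he1 := hEnt 1
    have heτ := hEnt τ
    linarith only [h, hf1, hfτ, he1, heτ]
  have hMAIN : Sm + eD + eB ≤ ipmE := by
    have hc2 : (0:ℝ) ≤ Sm + eD := by linarith only [hSm_nn, heD_nn]
    have hkey := AuxAlt.quad_opt hc2 hquad
    linarith only [hkey]
  -- completed squares
  set α : ℝ := frobNorm (m - (2⁻¹ : ℝ) • Etil) with hα
  set βsq : ℝ := ∑ i, ∑ j, ((hatC - hatB) i j + 2⁻¹ * hatB i j) ^ 2 * w i j with hβsq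
  have hβsq_nn : 0 ≤ βsq := by
    refine Finset.sum_nonneg fun i _ => Finset.sum_nonneg fun j _ => ?_
    have := hw_nn i j; positivity
  have hαsq : α ^ 2 = Sm - ipmE + SE / 4 := by
    rw [hα, AuxAlt.frobNorm_sq]
    have hpt : ∀ (i : Fin ρr) (j : Fin ρc),
        (m - (2⁻¹ : ℝ) • Etil) i j = m i j + (-2⁻¹ : ℝ) * Etil i j := by
      intro i j
      simp only [Matrix.sub_apply, Matrix.smul_apply, smul_eq_mul]
      ring
    calc ∑ i, ∑ j, ((m - (2⁻¹ : ℝ) • Etil) i j) ^ 2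
        = ∑ i, ∑ j, (m i j + (-2⁻¹ : ℝ) * Etil i j) ^ 2 :=
          Finset.sum_congr rfl fun i _ => Finset.sum_congr rfl fun j _ => by rw [hpt]
    _ = (∑ i, ∑ j, (m i j) ^ 2) + 2 * (-2⁻¹ : ℝ) * (∑ i, ∑ j, m i j * Etil i j)
          + (-2⁻¹ : ℝ) ^ 2 * (∑ i, ∑ j, (Etil i j) ^ 2) := AuxAlt.sum_expand' _ _ _
    _ = Sm - ipmE + SE / 4 := by rw [← hSm, ← hipmE, ← hSE]; ring
  have hβsqv : βsq = eD + eB + eBB / 4 := by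
    rw [hβsq]
    calc ∑ i, ∑ j, ((hatC - hatB) i j + 2⁻¹ * hatB i j) ^ 2 * w i j
        = (∑ i, ∑ j, ((hatC - hatB) i j) ^ 2 * w i j)
          + 2 * (2⁻¹ : ℝ) * (∑ i, ∑ j, (hatC - hatB) i j * hatB i j * w i j)
          + (2⁻¹ : ℝ) ^ 2 * (∑ i, ∑ j, (hatB i j) ^ 2 * w i j) :=
          AuxAlt.sum_expand _ _ w _
    _ = eD + eB + eBB / 4 := by rw [← heD, ← heBX, ← heBB]; ring
  have hsq : α ^ 2 + βsq ≤ SE / 4 + eBB / 4 := by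
    rw [hαsq, hβsqv]; linarith only [hMAIN]
  -- B1 : eBB ≤ γ s ‖Xbar‖²
  have heBBle : eBB ≤ γ * s * (frobNorm Xbar) ^ 2 := by
    have hXb2 : (frobNorm Xbar) ^ 2 = ∑ i, ∑ j, (hatB i j) ^ 2 := by
      rw [AuxAlt.frobNorm_sq]
      rw [← hIso Xbar, hhatB]
    have hstep : eBB ≤ ∑ i, ∑ j, (hatB i j) ^ 2 * (γ * s) := by
      rw [heBB]
      refine Finset.sum_le_sum fun i _ => Finset.sum_le_sum fun j _ => ?_
      by_cases hbox : (i : ℕ) < kr ∧ (j : ℕ) < kc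
      · exact mul_le_mul_of_nonneg_left (hw_box i j hbox.1 hbox.2) (sq_nonneg _)
      · rw [hBoff i j hbox]
        simp
    calc eBB ≤ ∑ i, ∑ j, (hatB i j) ^ 2 * (γ * s) := hstep
    _ = (γ * s) * ∑ i, ∑ j, (hatB i j) ^ 2 := by
        simp_rw [← Finset.sum_mul]
        ring
    _ = γ * s * (frobNorm Xbar) ^ 2 := by rw [hXb2]
  -- B2 : γ ‖W‖² ≤ βsq
  set W : Matrix (Fin p) (Fin n) ℝ := Xstar - Xbarstar with hW
  have hWle : γ * (frobNorm W) ^ 2 ≤ βsq := by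
    have hWsq : (frobNorm W) ^ 2 = ∑ i, ∑ j, ((Pᵀ * W * Q) i j) ^ 2 := by
      rw [AuxAlt.frobNorm_sq, ← hIso W]
    have hWpt : ∀ i j, (Pᵀ * W * Q) i j
        = if (i : ℕ) < kr ∧ (j : ℕ) < kc then 0 else hatC i j := by
      intro i j
      have h1 : Pᵀ * W * Q = Pᵀ * Xstar * Q - Pᵀ * Xbarstar * Q := by
        rw [hW, Matrix.mul_sub, Matrix.sub_mul]
      rw [h1, Matrix.sub_apply, ← hhatC, hmaskXbs i j]
      by_cases hbox : (i : ℕ) < kr ∧ (j : ℕ) < kc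
      · rw [if_pos hbox, if_pos hbox, sub_self]
      · rw [if_neg hbox, if_neg hbox, sub_zero]
    rw [hWsq, hβsq, Finset.mul_sum]
    refine Finset.sum_le_sum fun i _ => ?_
    rw [Finset.mul_sum]
    refine Finset.sum_le_sum fun j _ => ?_
    by_cases hbox : (i : ℕ) < kr ∧ (j : ℕ) < kc
    · rw [hWpt i j, if_pos hbox]
      have h1 : 0 ≤ ((hatC - hatB) i j + 2⁻¹ * hatB i j) ^ 2 * w i j := by
        have := hw_nn i j; positivity
      simpa using h1
    · have hb0 := hBoff i j hbox
      have hbase : (hatC - hatB) i j + 2⁻¹ * hatB i j = hatC i j := by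
        rw [Matrix.sub_apply, hb0]; ring
      rw [hbase, hWpt i j, if_neg hbox]
      have hwo := hw_off i j hbox
      calc γ * (hatC i j) ^ 2 = (hatC i j) ^ 2 * γ := by ring
      _ ≤ (hatC i j) ^ 2 * w i j := mul_le_mul_of_nonneg_left hwo (sq_nonneg _)
  -- H and its LR membership
  set H : Matrix (Fin p) (Fin n) ℝ := Xbarstar - Xbar with hH
  have hHLR : memLR Pkr Qkc H := by
    constructor
    · intro j
      obtain ⟨c1, hc1⟩ := hcols j
      have hXbs2 : Xbarstar = Pkr * (Pkrᵀ * (Xstar * (Qkc * Qkcᵀ))) := by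
        rw [hXbarstar]; simp only [Matrix.mul_assoc]
      refine ⟨(fun a => (Pkrᵀ * (Xstar * (Qkc * Qkcᵀ))) a j) - c1, ?_⟩
      funext i
      have h2 : Xbar i j = Pkr.mulVec c1 i := congrFun hc1 i
      show H i j = Pkr.mulVec _ i
      rw [hH, Matrix.sub_apply, hXbs2, h2]
      simp only [Matrix.mulVec, dotProduct, Matrix.mul_apply, Pi.sub_apply, mul_sub,
        Finset.sum_sub_distrib]
    · intro i
      obtain ⟨c2, hc2⟩ := hrows i
      have hXbs3 : Xbarstar = (Pkr * (Pkrᵀ * (Xstar * Qkc))) * Qkcᵀ := by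
        rw [hXbarstar]; simp only [Matrix.mul_assoc]
      refine ⟨(fun b => (Pkr * (Pkrᵀ * (Xstar * Qkc))) i b) - c2, ?_⟩
      funext j
      have h2 : Xbar i j = Qkc.mulVec c2 j := congrFun hc2 j
      show H i j = Qkc.mulVec _ j
      rw [hH, Matrix.sub_apply, hXbs3, h2]
      simp only [Matrix.mulVec, dotProduct, Matrix.mul_apply, Pi.sub_apply, mul_sub,
        Finset.sum_sub_distrib, Matrix.transpose_apply]
      congr 1
      exact Finset.sum_congr rfl fun b _ => by ring
  -- RIP
  have hRIPH := (hRIP H hHLR).1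
  -- triangle inequalities
  have hDHW : Mr * H * Mc = m - Mr * W * Mc := by
    have : H = D - W := by rw [hH, hD, hW]; abel
    rw [this, hm]
    rw [Matrix.mul_sub, Matrix.sub_mul]
  have hMrH : frobNorm (Mr * H * Mc) ≤ frobNorm m + frobNorm W := by
    rw [hDHW]
    calc frobNorm (m - Mr * W * Mc) ≤ frobNorm m + frobNorm (Mr * W * Mc) :=
          AuxAlt.frobNorm_sub_le _ _
    _ ≤ frobNorm m + frobNorm W := by
          have := AuxAlt.sel_frob_le hMr hMc W
          linarith
  have hm_le : frobNorm m ≤ α + frobNorm Etil / 2 := by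
    have h1 : m = (m - (2⁻¹ : ℝ) • Etil) + (2⁻¹ : ℝ) • Etil := by abel
    calc frobNorm m = frobNorm ((m - (2⁻¹ : ℝ) • Etil) + (2⁻¹ : ℝ) • Etil) := by rw [← h1]
    _ ≤ α + frobNorm ((2⁻¹ : ℝ) • Etil) := AuxAlt.frobNorm_triangle _ _
    _ = α + frobNorm Etil / 2 := by
          rw [AuxAlt.frobNorm_smul, abs_of_nonneg (by norm_num : (0:ℝ) ≤ 2⁻¹)]
          ring
  -- endgame
  have hK_nn : 0 ≤ (n : ℝ) * p / ((ρr : ℝ) * ρc) := by positivity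
  have he_nn : 0 ≤ frobNorm Etil := AuxAlt.frobNorm_nonneg' _
  have hx_nn : 0 ≤ frobNorm Xbar := AuxAlt.frobNorm_nonneg' _
  have ha_nn : 0 ≤ frobNorm m := AuxAlt.frobNorm_nonneg' _
  have hu_nn : 0 ≤ frobNorm W := AuxAlt.frobNorm_nonneg' _
  have hα_nn : 0 ≤ α := by rw [hα]; exact AuxAlt.frobNorm_nonneg' _
  have hMrH_nn : 0 ≤ frobNorm (Mr * H * Mc) := AuxAlt.frobNorm_nonneg' _
  have h2 : frobNorm (Mr * H * Mc) ^ 2 ≤ (frobNorm m + frobNorm W) ^ 2 :=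
    pow_le_pow_left₀ hMrH_nn hMrH 2
  have h3 : (frobNorm H) ^ 2
      ≤ ((n : ℝ) * p / ((ρr : ℝ) * ρc) / (1 - δ)) * (frobNorm m + frobNorm W) ^ 2 := by
    rw [div_mul_eq_mul_div, le_div_iff₀ h1δ]
    have h4 := mul_le_mul_of_nonneg_left h2 hK_nn
    have h5 := le_trans hRIPH h4
    linarith only [h5]
  have hKd_nn : 0 ≤ (n : ℝ) * p / ((ρr : ℝ) * ρc) / (1 - δ) := div_nonneg hK_nn h1δ.le
  have hchain : frobNorm H ≤ Real.sqrt ((n : ℝ) * p / ((ρr : ℝ) * ρc) / (1 - δ))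
      * (frobNorm m + frobNorm W) := by
    calc frobNorm H = Real.sqrt ((frobNorm H) ^ 2) :=
          (Real.sqrt_sq (AuxAlt.frobNorm_nonneg' H)).symm
    _ ≤ Real.sqrt (((n : ℝ) * p / ((ρr : ℝ) * ρc) / (1 - δ)) * (frobNorm m + frobNorm W) ^ 2) :=
        Real.sqrt_le_sqrt h3
    _ = _ := by
        rw [Real.sqrt_mul hKd_nn, Real.sqrt_sq (add_nonneg ha_nn hu_nn)]
  have huu : frobNorm W ≤ Real.sqrt βsq / Real.sqrt γ := by
    have h1 : (frobNorm W) ^ 2 ≤ βsq / γ := by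
      rw [le_div_iff₀ hγ]; linarith only [hWle]
    calc frobNorm W = Real.sqrt ((frobNorm W) ^ 2) := (Real.sqrt_sq hu_nn).symm
    _ ≤ Real.sqrt (βsq / γ) := Real.sqrt_le_sqrt h1
    _ = Real.sqrt βsq / Real.sqrt γ := Real.sqrt_div hβsq_nn γ
  have hαβ : α ^ 2 + (Real.sqrt βsq) ^ 2
      ≤ ((frobNorm Etil) ^ 2 + γ * s * (frobNorm Xbar) ^ 2) / 4 := by
    have hSEe : SE = (frobNorm Etil) ^ 2 := by rw [hSE, AuxAlt.frobNorm_sq]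
    rw [Real.sq_sqrt hβsq_nn, ← hSEe]
    calc α ^ 2 + βsq ≤ SE / 4 + eBB / 4 := hsq
    _ ≤ SE / 4 + (γ * s * (frobNorm Xbar) ^ 2) / 4 := by gcongr
    _ = (SE + γ * s * (frobNorm Xbar) ^ 2) / 4 := by ring
  have hsc := AuxAlt.scalar_main γ (frobNorm Etil) (frobNorm Xbar) s α (Real.sqrt βsq)
    (frobNorm m) (frobNorm W) hγ he_nn hx_nn hs_nn hα_nn (Real.sqrt_nonneg _)
    ha_nn hu_nn hm_le huu hαβ
  have hTeq : Real.sqrt ((n : ℝ) * p / ((ρr : ℝ) * ρc) / (1 - δ))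
      = Real.sqrt ((n : ℝ) * p / ((ρc : ℝ) * ρr * (1 - δ))) := by
    congr 1
    rw [div_div]
    ring
  have hfinal : frobNorm H ≤ Real.sqrt ((n : ℝ) * p / ((ρc : ℝ) * ρr * (1 - δ))) *
      ((2 + 1 / Real.sqrt (2 * γ)) * frobNorm Etil
        + (1 / Real.sqrt 2 + Real.sqrt γ) * (Real.sqrt s * frobNorm Xbar)) := by
    rw [← hTeq]
    exact le_trans hchain (mul_le_mul_of_nonneg_left hsc (Real.sqrt_nonneg _))
  refine le_trans hfinal (le_of_eq ?_)
  ring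
end

section
/- Suppose M_c ∈ ℝ^{n×ρ_c} satisfies (1−δ_c)‖w‖₂² ≤ (n/ρ_c)‖M_c^⊤ w‖₂² ≤ (1+δ_c)‖w‖₂² for all w ∈ span(Q_{k_c}), with δ_c ∈ (0,1), and assume λ_{k_c+1} > 0. Let c̄ ∈ ℝ^n lie in span(Q_{k_c}) and set c̃ = M_c^⊤ c̄. Let c° be a minimizer of c^⊤ L_c c over all c ∈ ℝ^n with M_c^⊤ c = c̃, and set c* = Q_{k_c} Q_{k_c}^⊤ c°. Then ‖c* − c̄‖₂ ≤ √(n/(ρ_c(1−δ_c))) √(λ_{k_c}/λ_{k_c+1}) ‖c̄‖₂. -/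
open Matrix

lemma nsq_eq_dot {n : ℕ} (v : Fin n → ℝ) : ∑ i, v i ^ 2 = v ⬝ᵥ v := by
  simp [dotProduct, sq]

lemma vecNorm_sq {m : Type*} [Fintype m] (v : m → ℝ) :
    vecNorm v ^ 2 = ∑ i, v i ^ 2 :=
  Real.sq_sqrt (Finset.sum_nonneg fun i _ => sq_nonneg _)

lemma orth_nsq {n : ℕ} (Q : Matrix (Fin n) (Fin n) ℝ) (h : Qᵀ * Q = 1)
    (v : Fin n → ℝ) : ∑ i, (Q.mulVec v i) ^ 2 = ∑ i, v i ^ 2 := by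
  rw [nsq_eq_dot, nsq_eq_dot]
  have : v ⬝ᵥ (Qᵀ * Q).mulVec v = Q.mulVec v ⬝ᵥ Q.mulVec v := by
    rw [← Matrix.mulVec_mulVec, Matrix.dotProduct_mulVec, Matrix.vecMul_transpose]
  rw [← this, h, Matrix.one_mulVec]

lemma qf_eig {n : ℕ} (Lc Q : Matrix (Fin n) (Fin n) ℝ) (ev : Fin n → ℝ)
    (hQorth : Qᵀ * Q = 1) (hLcQ : Lc * Q = Q * Matrix.diagonal ev)
    (y : Fin n → ℝ) :
    (Q.mulVec y) ⬝ᵥ Lc.mulVec (Q.mulVec y) = ∑ i, ev i * y i ^ 2 := by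
  have hQQt : Q * Qᵀ = 1 := mul_eq_one_comm.mp hQorth
  have hLc : Lc = Q * Matrix.diagonal ev * Qᵀ := by
    calc Lc = Lc * (Q * Qᵀ) := by rw [hQQt, Matrix.mul_one]
      _ = (Lc * Q) * Qᵀ := by rw [Matrix.mul_assoc]
      _ = Q * Matrix.diagonal ev * Qᵀ := by rw [hLcQ]
  rw [hLc]
  have h1 : (Q * Matrix.diagonal ev * Qᵀ).mulVec (Q.mulVec y)
      = Q.mulVec ((Matrix.diagonal ev).mulVec y) := by
    rw [Matrix.mulVec_mulVec, Matrix.mul_assoc, Matrix.mul_assoc, hQorth, Matrix.mul_one,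
      ← Matrix.mulVec_mulVec]
  rw [h1]
  have h2 : y ⬝ᵥ (Qᵀ * Q).mulVec ((Matrix.diagonal ev).mulVec y)
      = Q.mulVec y ⬝ᵥ Q.mulVec ((Matrix.diagonal ev).mulVec y) := by
    rw [← Matrix.mulVec_mulVec, Matrix.dotProduct_mulVec, Matrix.vecMul_transpose]
  rw [← h2, hQorth, Matrix.one_mulVec]
  simp only [dotProduct, Matrix.mulVec_diagonal]
  exact Finset.sum_congr rfl fun i _ => by ring

lemma sel_nsq {n ρ : ℕ} (M : Matrix (Fin n) (Fin ρ) ℝ) (hM : IsColSelection M)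
    (v : Fin n → ℝ) : ∑ j, (Mᵀ.mulVec v j) ^ 2 ≤ ∑ i, v i ^ 2 := by
  obtain ⟨f, hf, hMval⟩ := hM
  have hMv : ∀ j, Mᵀ.mulVec v j = v (f j) := by
    intro j
    simp only [Matrix.mulVec, dotProduct, Matrix.transpose_apply]
    rw [Finset.sum_eq_single (f j)]
    · rw [hMval]; simp
    · intro b _ hb; rw [hMval]; simp; intro h; exact absurd h hb
    · simp
  simp only [hMv]
  calc ∑ j, v (f j) ^ 2 = ∑ i ∈ Finset.univ.image f, v i ^ 2 :=
        (Finset.sum_image (f := fun i => v i ^ 2) (g := f) (fun a _ b _ h => hf h)).symm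
    _ ≤ ∑ i, v i ^ 2 := Finset.sum_le_sum_of_subset_of_nonneg (Finset.subset_univ _)
        (fun i _ _ => sq_nonneg _)

lemma reindex_castLE {n kc : ℕ} (h : kc ≤ n) (g : Fin n → ℝ) :
    ∑ j : Fin kc, g (Fin.castLE h j) = ∑ i : Fin n, if i.val < kc then g i else 0 := by
  rw [← Finset.sum_filter]
  rw [show Finset.univ.filter (fun i : Fin n => i.val < kc)
      = Finset.univ.image (Fin.castLE h) by
    ext i
    simp only [Finset.mem_filter, Finset.mem_univ, true_and, Finset.mem_image]
    constructor
    · intro hi; exact ⟨⟨i.val, hi⟩, rfl⟩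
    · rintro ⟨j, -, rfl⟩; exact j.isLt]
  exact (Finset.sum_image (f := g) (g := Fin.castLE h)
    (fun a _ b _ hab => Fin.castLE_injective h hab)).symm

/-- error bound for the parameter-free clustering decoder:
`c°` minimizes `c^⊤ L_c c` subject to `M_c^⊤ c = c̃` where `c̃ = M_c^⊤ c̄`, and
`c* = Q_{k_c} Q_{k_c}^⊤ c°`. The 1-indexed eigenvalues `λ_{k_c}`, `λ_{k_c+1}` of `L_c`
are `ev ⟨k_c−1⟩`, `ev ⟨k_c⟩`. -/
theorem approximate_clustering_decoder_bound
    (n ρc kc : ℕ) (hkc0 : 0 < kc) (hkc : kc < n)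
    (Lc : Matrix (Fin n) (Fin n) ℝ) (hLc : Lc.PosSemidef)
    (ev : Fin n → ℝ) (hev : Monotone ev)
    (Q : Matrix (Fin n) (Fin n) ℝ) (hQorth : Qᵀ * Q = 1)
    (hLcQ : Lc * Q = Q * Matrix.diagonal ev)
    (Qkc : Matrix (Fin n) (Fin kc) ℝ) (hQkc : Qkc = Q.submatrix id (Fin.castLE hkc.le))
    (Mc : Matrix (Fin n) (Fin ρc) ℝ) (hMc : IsColSelection Mc)
    (δc : ℝ) (hδc : δc ∈ Set.Ioo (0 : ℝ) 1)
    (hRIP : ∀ w : Fin n → ℝ, inColSpan Qkc w →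
      (1 - δc) * (vecNorm w) ^ 2 ≤ ((n : ℝ) / ρc) * (vecNorm (Mcᵀ.mulVec w)) ^ 2 ∧
      ((n : ℝ) / ρc) * (vecNorm (Mcᵀ.mulVec w)) ^ 2 ≤ (1 + δc) * (vecNorm w) ^ 2)
    (hlam1 : 0 < ev ⟨kc, hkc⟩)
    (cbar : Fin n → ℝ) (hcbar : inColSpan Qkc cbar)
    (ctil : Fin ρc → ℝ) (hctil : ctil = Mcᵀ.mulVec cbar)
    (cnot : Fin n → ℝ) (hfeas : Mcᵀ.mulVec cnot = ctil)
    (hmin : ∀ c : Fin n → ℝ, Mcᵀ.mulVec c = ctil →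
      cnot ⬝ᵥ Lc.mulVec cnot ≤ c ⬝ᵥ Lc.mulVec c) :
    vecNorm (Qkc.mulVec (Qkcᵀ.mulVec cnot) - cbar) ≤
      Real.sqrt ((n : ℝ) / ((ρc : ℝ) * (1 - δc))) *
        Real.sqrt (ev ⟨kc - 1, by omega⟩ / ev ⟨kc, hkc⟩) * vecNorm cbar := by
  obtain ⟨d, hd⟩ := hcbar
  obtain ⟨hδ0, hδ1⟩ := hδc
  have h1δ : (0:ℝ) < 1 - δc := by linarith
  set y : Fin n → ℝ := Qᵀ.mulVec cnot with hy
  have hQQt : Q * Qᵀ = 1 := mul_eq_one_comm.mp hQorth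
  have hcnot : cnot = Q.mulVec y := by
    rw [hy, Matrix.mulVec_mulVec, hQQt, Matrix.one_mulVec]
  set ylow : Fin n → ℝ := fun i => if i.val < kc then y i else 0 with hylow
  set yhigh : Fin n → ℝ := fun i => if i.val < kc then 0 else y i with hyhigh
  have hsplitv : ylow + yhigh = y := by
    funext i; by_cases h : i.val < kc <;> simp [hylow, hyhigh, h]
  have hQkcT : Qkcᵀ.mulVec cnot = fun j => y (Fin.castLE hkc.le j) := by
    funext j
    simp [hQkc, Matrix.mulVec, dotProduct, hy, Matrix.transpose_apply, Matrix.submatrix_apply]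
  have halpha : Qkc.mulVec (Qkcᵀ.mulVec cnot) = Q.mulVec ylow := by
    funext i
    rw [hQkcT]
    simp only [Matrix.mulVec, dotProduct, hQkc, Matrix.submatrix_apply, id]
    rw [reindex_castLE hkc.le (fun k => Q i k * y k)]
    apply Finset.sum_congr rfl
    intro k _
    by_cases h : k.val < kc <;> simp [hylow, h]
  set z : Fin n → ℝ := fun i => if h : i.val < kc then d ⟨i.val, h⟩ else 0 with hzdef
  have hcbarz : cbar = Q.mulVec z := by
    funext i
    rw [hd]
    simp only [Matrix.mulVec, dotProduct, hQkc, Matrix.submatrix_apply, id]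
    have e : ∑ j : Fin kc, Q i (Fin.castLE hkc.le j) * d j
        = ∑ j : Fin kc, (fun k => Q i k * z k) (Fin.castLE hkc.le j) := by
      apply Finset.sum_congr rfl; intro j _
      simp only [hzdef]
      rw [dif_pos (show ((Fin.castLE hkc.le j : Fin n) : ℕ) < kc from j.isLt)]
      congr 1
    rw [e, reindex_castLE hkc.le (fun k => Q i k * z k)]
    symm
    apply Finset.sum_congr rfl
    intro k _
    by_cases h : k.val < kc
    · simp [h]
    · simp [hzdef, h]
  have qf_cnot : cnot ⬝ᵥ Lc.mulVec cnot = ∑ i, ev i * y i ^ 2 := by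
    rw [hcnot]; exact qf_eig Lc Q ev hQorth hLcQ y
  have qf_cbar : cbar ⬝ᵥ Lc.mulVec cbar = ∑ i, ev i * z i ^ 2 := by
    rw [hcbarz]; exact qf_eig Lc Q ev hQorth hLcQ z
  have hev0 : ∀ i, 0 ≤ ev i := by
    intro i
    have h1 := hLc.dotProduct_mulVec_nonneg (Q.mulVec (Pi.single i 1))
    simp only [star_trivial] at h1
    rw [qf_eig Lc Q ev hQorth hLcQ] at h1
    have e : ∑ j, ev j * (Pi.single i 1 : Fin n → ℝ) j ^ 2 = ev i := by
      rw [Finset.sum_eq_single i]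
      · simp
      · intro b _ hb; simp [Pi.single_apply, hb]
      · simp
    rwa [e] at h1
  set S := ∑ i, yhigh i ^ 2 with hS
  have hSnn : (0:ℝ) ≤ S := Finset.sum_nonneg fun i _ => sq_nonneg _
  have h1 : ev ⟨kc, hkc⟩ * S ≤ ∑ i, ev i * y i ^ 2 := by
    rw [hS, Finset.mul_sum]
    apply Finset.sum_le_sum
    intro i _
    by_cases h : i.val < kc
    · simp only [hyhigh, if_pos h]
      simpa using mul_nonneg (hev0 i) (sq_nonneg (y i))
    · simp only [hyhigh, if_neg h]
      exact mul_le_mul_of_nonneg_right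
        (hev (show (⟨kc, hkc⟩ : Fin n) ≤ i by simp [Fin.le_def]; omega)) (sq_nonneg _)
  have h2 : ∑ i, ev i * z i ^ 2 ≤ ev ⟨kc - 1, by omega⟩ * ∑ i, z i ^ 2 := by
    rw [Finset.mul_sum]
    apply Finset.sum_le_sum
    intro i _
    by_cases h : i.val < kc
    · exact mul_le_mul_of_nonneg_right
        (hev (show i ≤ (⟨kc - 1, by omega⟩ : Fin n) by rw [Fin.le_def]; simp; omega))
        (sq_nonneg _)
    · simp [hzdef, h]
  have hzcbar : ∑ i, z i ^ 2 = ∑ i, cbar i ^ 2 := by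
    rw [hcbarz]; exact (orth_nsq Q hQorth z).symm
  have hchain : ev ⟨kc, hkc⟩ * S ≤ ev ⟨kc - 1, by omega⟩ * ∑ i, cbar i ^ 2 := by
    calc ev ⟨kc, hkc⟩ * S ≤ ∑ i, ev i * y i ^ 2 := h1
      _ = cnot ⬝ᵥ Lc.mulVec cnot := qf_cnot.symm
      _ ≤ cbar ⬝ᵥ Lc.mulVec cbar := hmin cbar hctil.symm
      _ = ∑ i, ev i * z i ^ 2 := qf_cbar
      _ ≤ ev ⟨kc - 1, by omega⟩ * ∑ i, z i ^ 2 := h2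
      _ = ev ⟨kc - 1, by omega⟩ * ∑ i, cbar i ^ 2 := by rw [hzcbar]
  set w := Qkc.mulVec (Qkcᵀ.mulVec cnot) - cbar with hw
  have hwspan : inColSpan Qkc w :=
    ⟨Qkcᵀ.mulVec cnot - d, by rw [hw, Matrix.mulVec_sub, ← hd]⟩
  have hsum2 : Q.mulVec ylow + Q.mulVec yhigh = cnot := by
    rw [← Matrix.mulVec_add, hsplitv]; exact hcnot.symm
  have hMw : Mcᵀ.mulVec w = -(Mcᵀ.mulVec (Q.mulVec yhigh)) := by
    have e1 : Mcᵀ.mulVec w = Mcᵀ.mulVec (Q.mulVec ylow) - Mcᵀ.mulVec cbar := by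
      rw [hw, halpha, Matrix.mulVec_sub]
    have e2 : Mcᵀ.mulVec (Q.mulVec ylow) + Mcᵀ.mulVec (Q.mulVec yhigh) = Mcᵀ.mulVec cbar := by
      rw [← Matrix.mulVec_add, hsum2, hfeas, hctil]
    rw [e1, ← e2]; abel
  have hMwsq : ∑ j, (Mcᵀ.mulVec w j) ^ 2 ≤ S := by
    calc ∑ j, (Mcᵀ.mulVec w j) ^ 2 = ∑ j, (Mcᵀ.mulVec (Q.mulVec yhigh) j) ^ 2 := by
          rw [hMw]; simp [neg_sq]
      _ ≤ ∑ i, (Q.mulVec yhigh i) ^ 2 := sel_nsq Mc hMc _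
      _ = S := orth_nsq Q hQorth yhigh
  have hrip := (hRIP w hwspan).1
  rw [vecNorm_sq, vecNorm_sq] at hrip
  have hnρ : (0:ℝ) ≤ (n:ℝ)/ρc := by positivity
  have hSbound : S ≤ ev ⟨kc - 1, by omega⟩ / ev ⟨kc, hkc⟩ * ∑ i, cbar i ^ 2 := by
    rw [div_mul_eq_mul_div, le_div_iff₀ hlam1]
    calc S * ev ⟨kc, hkc⟩ = ev ⟨kc, hkc⟩ * S := mul_comm _ _
      _ ≤ ev ⟨kc - 1, by omega⟩ * ∑ i, cbar i ^ 2 := hchain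
  have step : (1 - δc) * ∑ i, w i ^ 2 ≤
      ((n:ℝ)/ρc) * (ev ⟨kc - 1, by omega⟩ / ev ⟨kc, hkc⟩ * ∑ i, cbar i ^ 2) := by
    refine hrip.trans ?_
    exact mul_le_mul_of_nonneg_left (hMwsq.trans hSbound) hnρ
  have hA0 : (0:ℝ) ≤ (n:ℝ) / ((ρc:ℝ) * (1 - δc)) := by positivity
  have hB0 : (0:ℝ) ≤ ev ⟨kc - 1, by omega⟩ / ev ⟨kc, hkc⟩ :=
    div_nonneg (hev0 _) hlam1.le
  have hABC : ∑ i, w i ^ 2 ≤ ((n:ℝ) / ((ρc:ℝ) * (1 - δc))) *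
      (ev ⟨kc - 1, by omega⟩ / ev ⟨kc, hkc⟩ * ∑ i, cbar i ^ 2) := by
    rw [show (n:ℝ) / ((ρc:ℝ) * (1 - δc)) = ((n:ℝ)/ρc) / (1 - δc) from (div_div _ _ _).symm,
      div_mul_eq_mul_div, le_div_iff₀ h1δ]
    calc (∑ i, w i ^ 2) * (1 - δc) = (1 - δc) * ∑ i, w i ^ 2 := mul_comm _ _
      _ ≤ _ := step
  have hfinal := Real.sqrt_le_sqrt hABC
  rw [Real.sqrt_mul hA0, Real.sqrt_mul hB0] at hfinal
  calc vecNorm w = Real.sqrt (∑ i, w i ^ 2) := rfl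
    _ ≤ Real.sqrt ((n:ℝ) / ((ρc:ℝ) * (1 - δc))) *
        (Real.sqrt (ev ⟨kc - 1, by omega⟩ / ev ⟨kc, hkc⟩) * Real.sqrt (∑ i, cbar i ^ 2)) :=
        hfinal
    _ = Real.sqrt ((n:ℝ) / ((ρc:ℝ) * (1 - δc))) *
        Real.sqrt (ev ⟨kc - 1, by omega⟩ / ev ⟨kc, hkc⟩) * vecNorm cbar := by
        rw [mul_assoc]; rfl
end
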